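/- Let (V,w) be a weighted graph, let k < h ≤ |V| be integers, and let H ⊆ V be a set of h vertices such that every vertex of H has weighted degree at least the weighted degree of every vertex of V∖H. Then for every S ⊆ V with |S| = k there exists S' ⊆ H with |S'| = k such that δ_w(S') ≥ (1 − 2k/(h−k))·δ_w(S). (Iterated exchange step in the proof of Theorem 2.1.) -/

import Mathlib

open Finset

/-- The cut value of a set `S`: total weight of pairs with exactly one endpoint in `S`. -/
noncomputable def cutVal {V : Type*} [Fintype V] [DecidableEq V]
    (w : V → V → ℝ) (S : Finset V) : ℝ :=
  ∑ u ∈ S, ∑ v ∈ Sᶜ, w u v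

/-- The weighted degree of a vertex `v`. -/
noncomputable def wdeg {V : Type*} [Fintype V] [DecidableEq V]
    (w : V → V → ℝ) (v : V) : ℝ :=
  ∑ u ∈ Finset.univ.erase v, w u v

lemma cutVal_nonneg {V : Type*} [Fintype V] [DecidableEq V]
    (w : V → V → ℝ) (hnonneg : ∀ u v, 0 ≤ w u v) (S : Finset V) :
    0 ≤ cutVal w S :=
  Finset.sum_nonneg fun _ _ => Finset.sum_nonneg fun _ _ => hnonneg _ _

lemma cutVal_insert {V : Type*} [Fintype V] [DecidableEq V]
    (w : V → V → ℝ) (hsymm : ∀ u v, w u v = w v u)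
    {S : Finset V} {v : V} (hv : v ∉ S) :
    cutVal w (insert v S) = cutVal w S + wdeg w v - 2 * ∑ x ∈ S, w x v := by
  have hvc : v ∈ Sᶜ := by simpa using hv
  have hcompl : (insert v S)ᶜ = Sᶜ.erase v := by
    ext x; simp [mem_erase, and_comm]
  have h1 : ∀ x ∈ S, ∑ y ∈ Sᶜ.erase v, w x y = (∑ y ∈ Sᶜ, w x y) - w x v := by
    intro x hx
    exact Finset.sum_erase_eq_sub hvc
  have h2 : ∑ y ∈ Sᶜ.erase v, w v y = (∑ y ∈ Sᶜ, w v y) - w v v :=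
    Finset.sum_erase_eq_sub hvc
  have h3 : wdeg w v = (∑ u, w u v) - w v v := by
    unfold wdeg
    exact Finset.sum_erase_eq_sub (mem_univ v)
  have h4 : (∑ u, w u v) = (∑ u ∈ S, w u v) + ∑ u ∈ Sᶜ, w u v :=
    (Finset.sum_add_sum_compl S _).symm
  have h5 : ∑ y ∈ Sᶜ, w v y = ∑ y ∈ Sᶜ, w y v := by
    exact Finset.sum_congr rfl fun y _ => hsymm v y
  unfold cutVal
  rw [hcompl, sum_insert hv, Finset.sum_congr rfl h1, Finset.sum_sub_distrib, h2]
  rw [h3, h4] at *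
  rw [h5]
  ring

lemma key_exchange {V : Type*} [Fintype V] [DecidableEq V]
    (w : V → V → ℝ) (hsymm : ∀ u v, w u v = w v u) (hnonneg : ∀ u v, 0 ≤ w u v)
    (k h : ℕ) (hkh : k < h)
    (H : Finset V) (hHcard : H.card = h)
    (hdeg : ∀ u ∈ H, ∀ v ∉ H, wdeg w v ≤ wdeg w u)
    (hα : 0 ≤ 1 - 2 / ((h : ℝ) - k)) :
    ∀ m : ℕ, ∀ S : Finset V, S.card = k → (S \ H).card = m →
      ∃ S' ⊆ H, S'.card = k ∧
        (1 - 2 / ((h : ℝ) - k)) ^ m * cutVal w S ≤ cutVal w S' := by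
  have hhk : (0:ℝ) < (h:ℝ) - k := by
    have : (k:ℝ) < h := by exact_mod_cast hkh
    linarith
  intro m
  induction m with
  | zero =>
    intro S hSk hSH
    refine ⟨S, ?_, hSk, by simp⟩
    rw [Finset.card_eq_zero, Finset.sdiff_eq_empty_iff_subset] at hSH
    exact hSH
  | succ m ih =>
    intro S hSk hSH
    -- pick u ∈ S \ H
    have hne : (S \ H).Nonempty := by
      rw [← Finset.card_pos, hSH]; omega
    obtain ⟨u, hu⟩ := hne
    have huS : u ∈ S := (Finset.mem_sdiff.mp hu).1
    have huH : u ∉ H := (Finset.mem_sdiff.mp hu).2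
    -- H \ S is large
    have hHSc : h - k ≤ (H \ S).card := by
      have := Finset.le_card_sdiff S H
      omega
    have hHSne : (H \ S).Nonempty := by
      rw [← Finset.card_pos]; omega
    -- pick v ∈ H \ S minimizing d
    set T := S.erase u with hT
    obtain ⟨v, hvHS, hvmin⟩ := Finset.exists_min_image (H \ S)
      (fun v => ∑ x ∈ T, w x v) hHSne
    have hvH : v ∈ H := (Finset.mem_sdiff.mp hvHS).1
    have hvS : v ∉ S := (Finset.mem_sdiff.mp hvHS).2
    set d : ℝ := ∑ x ∈ T, w x v with hd
    have hd0 : 0 ≤ d := Finset.sum_nonneg fun _ _ => hnonneg _ _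
    -- sum of d over H \ S is at most cutVal S
    have hsum : ∑ v' ∈ H \ S, (∑ x ∈ T, w x v') ≤ cutVal w S := by
      have h1 : ∑ v' ∈ H \ S, (∑ x ∈ T, w x v') ≤
          ∑ v' ∈ H \ S, (∑ x ∈ S, w x v') := by
        apply Finset.sum_le_sum
        intro v' _
        exact Finset.sum_le_sum_of_subset_of_nonneg (Finset.erase_subset _ _)
          (fun _ _ _ => hnonneg _ _)
      have h2 : ∑ v' ∈ H \ S, (∑ x ∈ S, w x v') ≤
          ∑ v' ∈ Sᶜ, (∑ x ∈ S, w x v') := by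
        apply Finset.sum_le_sum_of_subset_of_nonneg
        · intro x hx
          simpa using (Finset.mem_sdiff.mp hx).2
        · intro _ _ _
          exact Finset.sum_nonneg fun _ _ => hnonneg _ _
      have h3 : ∑ v' ∈ Sᶜ, (∑ x ∈ S, w x v') = cutVal w S := by
        unfold cutVal; rw [Finset.sum_comm]
      linarith
    -- hence the min d is at most cutVal S / (h - k)
    have hdle : ((h:ℝ) - k) * d ≤ cutVal w S := by
      have hcard : ((h:ℝ) - k) ≤ (H \ S).card := by
        have : ((h - k : ℕ) : ℝ) ≤ ((H \ S).card : ℝ) := by exact_mod_cast hHSc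
        have hk' : (k:ℝ) ≤ h := by exact_mod_cast hkh.le
        rw [Nat.cast_sub hkh.le] at this
        linarith
      have hmin : ((H \ S).card : ℝ) * d ≤ ∑ v' ∈ H \ S, (∑ x ∈ T, w x v') := by
        have := Finset.card_nsmul_le_sum (H \ S) (fun v' => ∑ x ∈ T, w x v') d hvmin
        rwa [nsmul_eq_mul] at this
      nlinarith
    -- the new set
    set S₁ := insert v T with hS₁
    have hvT : v ∉ T := fun hc => hvS (Finset.mem_of_mem_erase hc)
    have huT : u ∉ T := Finset.notMem_erase _ _
    have hTcard : T.card = k - 1 := by rw [hT, Finset.card_erase_of_mem huS, hSk]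
    have hk1 : 1 ≤ k := by
      have := Finset.card_pos.mpr ⟨u, huS⟩; omega
    have hS₁card : S₁.card = k := by
      rw [hS₁, Finset.card_insert_of_notMem hvT, hTcard]; omega
    have hS₁H : (S₁ \ H).card = m := by
      have heq : S₁ \ H = (S \ H).erase u := by
        ext x
        simp only [hS₁, hT, Finset.mem_sdiff, Finset.mem_insert, Finset.mem_erase]
        constructor
        · rintro ⟨hx1 | ⟨hx2, hx3⟩, hx4⟩
          · exact absurd (hx1 ▸ hvH) hx4
          · exact ⟨hx2, hx3, hx4⟩
        · rintro ⟨hx1, hx2, hx3⟩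
          exact ⟨Or.inr ⟨hx1, hx2⟩, hx3⟩
      rw [heq, Finset.card_erase_of_mem hu, hSH]
      omega
    -- cut value comparison
    have hinsS : insert u T = S := Finset.insert_erase huS
    have hcutS : cutVal w S = cutVal w T + wdeg w u - 2 * ∑ x ∈ T, w x u := by
      rw [← hinsS]; exact cutVal_insert w hsymm huT
    have hcutS₁ : cutVal w S₁ = cutVal w T + wdeg w v - 2 * d :=
      cutVal_insert w hsymm hvT
    have hwd : wdeg w u ≤ wdeg w v := hdeg v hvH u huH
    have hsum0 : 0 ≤ ∑ x ∈ T, w x u := Finset.sum_nonneg fun _ _ => hnonneg _ _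
    have hstep : cutVal w S - 2 * d ≤ cutVal w S₁ := by linarith
    have hαstep : (1 - 2 / ((h:ℝ) - k)) * cutVal w S ≤ cutVal w S₁ := by
      have : (1 - 2 / ((h:ℝ) - k)) * cutVal w S = cutVal w S - 2 * (cutVal w S / ((h:ℝ) - k)) := by
        field_simp
      rw [this]
      have : d ≤ cutVal w S / ((h:ℝ) - k) := by
        rw [le_div_iff₀ hhk]; nlinarith
      linarith
    obtain ⟨S', hS'H, hS'card, hS'ineq⟩ := ih S₁ hS₁card hS₁H
    refine ⟨S', hS'H, hS'card, ?_⟩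
    have hpow : (0:ℝ) ≤ (1 - 2 / ((h:ℝ) - k)) ^ m := pow_nonneg hα m
    calc (1 - 2 / ((h:ℝ) - k)) ^ (m+1) * cutVal w S
        = (1 - 2 / ((h:ℝ) - k)) ^ m * ((1 - 2 / ((h:ℝ) - k)) * cutVal w S) := by ring
      _ ≤ (1 - 2 / ((h:ℝ) - k)) ^ m * cutVal w S₁ :=
          mul_le_mul_of_nonneg_left hαstep hpow
      _ ≤ cutVal w S' := hS'ineq

/-- Iterated exchange step in the proof of Theorem 2.1: if `H` consists of `h > k`
highest-weighted-degree vertices, then every `k`-set `S` can be replaced by a `k`-set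
`S' ⊆ H` with `δ_w(S') ≥ (1 - 2k/(h-k))·δ_w(S)`. -/
theorem iterated_exchange {V : Type*} [Fintype V] [DecidableEq V]
    (w : V → V → ℝ) (hsymm : ∀ u v, w u v = w v u) (hnonneg : ∀ u v, 0 ≤ w u v)
    (k h : ℕ) (hkh : k < h) (hhV : h ≤ Fintype.card V)
    (H : Finset V) (hHcard : H.card = h)
    (hdeg : ∀ u ∈ H, ∀ v ∉ H, wdeg w v ≤ wdeg w u) :
    ∀ S : Finset V, S.card = k →
      ∃ S' ⊆ H, S'.card = k ∧
        (1 - 2 * (k : ℝ) / ((h : ℝ) - (k : ℝ))) * cutVal w S ≤ cutVal w S' := by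
  intro S hSk
  have hhk : (0:ℝ) < (h:ℝ) - k := by
    have : (k:ℝ) < h := by exact_mod_cast hkh
    linarith
  by_cases hcoef : 1 - 2 * (k : ℝ) / ((h : ℝ) - k) ≤ 0
  · -- pick any k-subset of H
    obtain ⟨S', hS'H, hS'card⟩ := Finset.exists_subset_card_eq (by omega : k ≤ H.card)
    refine ⟨S', hS'H, hS'card, ?_⟩
    have h1 : (1 - 2 * (k : ℝ) / ((h : ℝ) - k)) * cutVal w S ≤ 0 :=
      mul_nonpos_of_nonpos_of_nonneg hcoef (cutVal_nonneg w hnonneg S)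
    exact h1.trans (cutVal_nonneg w hnonneg S')
  · push_neg at hcoef
    by_cases hk0 : k = 0
    · subst hk0
      refine ⟨∅, Finset.empty_subset _, Finset.card_empty, ?_⟩
      have : S = ∅ := Finset.card_eq_zero.mp hSk
      subst this
      simp [cutVal]
    · have hk1 : 1 ≤ k := Nat.one_le_iff_ne_zero.mpr hk0
      -- 2k < h - k
      have h2k : 2 * (k:ℝ) < (h:ℝ) - k := by
        by_contra hc
        push_neg at hc
        have : 1 ≤ 2 * (k:ℝ) / ((h:ℝ) - k) := (one_le_div hhk).mpr hc
        linarith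
      have hα : 0 ≤ 1 - 2 / ((h:ℝ) - k) := by
        have hk1' : (1:ℝ) ≤ k := by exact_mod_cast hk1
        have : (2:ℝ) ≤ (h:ℝ) - k := by linarith
        have : 2 / ((h:ℝ) - k) ≤ 1 := by
          rw [div_le_one hhk]; linarith
        linarith
      have hα1 : 1 - 2 / ((h:ℝ) - k) ≤ 1 := by
        have : 0 ≤ 2 / ((h:ℝ) - k) := by positivity
        linarith
      obtain ⟨S', hS'H, hS'card, hS'ineq⟩ :=
        key_exchange w hsymm hnonneg k h hkh H hHcard hdeg hα
          (S \ H).card S hSk rfl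
      refine ⟨S', hS'H, hS'card, ?_⟩
      have hmk : (S \ H).card ≤ k := le_trans (Finset.card_le_card (Finset.sdiff_subset)) hSk.le
      have hpow1 : (1 - 2 / ((h:ℝ) - k)) ^ k ≤ (1 - 2 / ((h:ℝ) - k)) ^ (S \ H).card :=
        pow_le_pow_of_le_one hα hα1 hmk
      have hbern : 1 - 2 * (k:ℝ) / ((h:ℝ) - k) ≤ (1 - 2 / ((h:ℝ) - k)) ^ k := by
        have hhk1 : (1:ℝ) ≤ (h:ℝ) - k := by
          have : (k:ℝ) + 1 ≤ h := by exact_mod_cast hkh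
          linarith
        have h2 : (-2:ℝ) ≤ -(2 / ((h:ℝ) - k)) := by
          have : 2 / ((h:ℝ) - k) ≤ 2 := by
            rw [div_le_iff₀ hhk]; nlinarith
          linarith
        have hb := one_add_mul_le_pow h2 k
        have heq : (1:ℝ) + k * (-(2 / ((h:ℝ) - k))) = 1 - 2 * k / ((h:ℝ) - k) := by
          field_simp; ring
        rw [heq] at hb
        have heq2 : (1:ℝ) + -(2 / ((h:ℝ) - k)) = 1 - 2 / ((h:ℝ) - k) := by ring
        rw [heq2] at hb
        exact hb
      have hcS : 0 ≤ cutVal w S := cutVal_nonneg w hnonneg S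
      calc (1 - 2 * (k : ℝ) / ((h : ℝ) - k)) * cutVal w S
          ≤ (1 - 2 / ((h:ℝ) - k)) ^ k * cutVal w S :=
            mul_le_mul_of_nonneg_right hbern hcS
        _ ≤ (1 - 2 / ((h:ℝ) - k)) ^ (S \ H).card * cutVal w S :=
            mul_le_mul_of_nonneg_right hpow1 hcS
        _ ≤ cutVal w S' := hS'ineq
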